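/- arXiv:1008.1081 — 2 statements merged into one kernel-verified Lean document; each statement's English description precedes it below -/
import Mathlib

section
/- (Theorem 5.5, definition and holomorphy of the M-function.) Let Ã ∈ M be closed, corresponding to T : V → W, and let ρ(Ã) := {λ ∈ ℂ : Ã − λ : D(Ã) → H is bijective with bounded inverse}. For each λ ∈ ρ(Ã), the formula M(λ) := pr_ζ ∘ (I − (Ã − λ)^{-1}(A_max − λ)) ∘ A_γ^{-1} ∘ i_W, where pr_ζ u := u_ζ for u ∈ D(A_max), defines a bounded linear operator from W into V, and the map λ ↦ M(λ) is holomorphic (complex differentiable) on the open set ρ(Ã) with values in the Banach space of bounded operators from W to V. -/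
noncomputable section

open Filter Topology

namespace GrubbExt

variable {H : Type*} [NormedAddCommGroup H] [InnerProductSpace ℂ H] [CompleteSpace H]

/-- The inclusion of a closed subspace composed with the orthogonal projection onto it,
as a continuous linear map `H →L[ℂ] H`.  This is `i_K ∘ pr_K` in the notation of the paper. -/
def projCl (K : Submodule ℂ H) (hK : IsClosed (K : Set H)) : H →L[ℂ] H :=
  haveI : CompleteSpace K := hK.completeSpace_coe
  K.subtypeL.comp K.orthogonalProjection

/-- `R` is the (everywhere defined, bounded) inverse of `P - lam`. -/
structure IsResolvent (P : H →ₗ.[ℂ] H) (lam : ℂ) (R : H →L[ℂ] H) : Prop where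
  mem : ∀ f : H, R f ∈ P.domain
  left : ∀ u : P.domain, R (P u - lam • (u : H)) = u
  right : ∀ f : H, P ⟨R f, mem f⟩ - lam • R f = f

/-- `E^λ := I + λ(A_γ - λ)^{-1}`, given the resolvent `R = (A_γ - λ)^{-1}`. -/
def Eop (lam : ℂ) (R : H →L[ℂ] H) : H →L[ℂ] H := ContinuousLinearMap.id ℂ H + lam • R

/-- `E'^{λ̄} := I + λ̄(A_γ^* - λ̄)^{-1}`, given the resolvent `R' = (A_γ^* - λ̄)^{-1}`. -/
def Eop' (lam : ℂ) (R' : H →L[ℂ] H) : H →L[ℂ] H :=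
  ContinuousLinearMap.id ℂ H + (starRingEnd ℂ lam) • R'

/-- The resolvent set of a partially defined operator. -/
def resSet (P : H →ₗ.[ℂ] H) : Set ℂ := {lam | ∃ R : H →L[ℂ] H, IsResolvent P lam R}

/-- The set of "Rayleigh quotients" `Re⟨Pu,u⟩` over unit vectors `u` in the domain of `P`;
the lower bound `m(P)` is the infimum of this set. -/
def raySet (P : H →ₗ.[ℂ] H) : Set ℝ :=
  {r | ∃ u : P.domain, ‖(u : H)‖ = 1 ∧ r = (inner ℂ (P u) (u : H) : ℂ).re}

/-- The abstract set-up of Grubb's extension theory: a dual pair `A_min, A'_min` of closed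
densely defined operators in a Hilbert space `H`, together with a reference operator `A_γ`
lying between `A_min` and `A_max := (A'_min)*`, which is bijective with bounded inverse
(and whose adjoint is likewise bijective with bounded inverse). -/
structure Setup (H : Type*) [NormedAddCommGroup H] [InnerProductSpace ℂ H]
    [CompleteSpace H] where
  Amin : H →ₗ.[ℂ] H
  Amin' : H →ₗ.[ℂ] H
  closed_Amin : IsClosed (Amin.graph : Set (H × H))
  closed_Amin' : IsClosed (Amin'.graph : Set (H × H))
  dense_Amin : Dense (Amin.domain : Set H)
  dense_Amin' : Dense (Amin'.domain : Set H)
  Amin_le_max : Amin ≤ Amin'.adjoint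
  Amin'_le_max' : Amin' ≤ Amin.adjoint
  Agam : H →ₗ.[ℂ] H
  Amin_le_Agam : Amin ≤ Agam
  Agam_le_max : Agam ≤ Amin'.adjoint
  Agaminv : H →L[ℂ] H
  Agaminv_mem : ∀ f : H, Agaminv f ∈ Agam.domain
  Agaminv_left : ∀ u : Agam.domain, Agaminv (Agam u) = u
  Agaminv_right : ∀ f : H, Agam ⟨Agaminv f, Agaminv_mem f⟩ = f
  Agamstarinv : H →L[ℂ] H
  Agamstarinv_mem : ∀ f : H, Agamstarinv f ∈ Agam.adjoint.domain
  Agamstarinv_left : ∀ v : Agam.adjoint.domain, Agamstarinv (Agam.adjoint v) = v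
  Agamstarinv_right : ∀ f : H, Agam.adjoint ⟨Agamstarinv f, Agamstarinv_mem f⟩ = f

namespace Setup

variable (S : Setup H)

/-- `A_max := (A'_min)*`. -/
def Amax : H →ₗ.[ℂ] H := S.Amin'.adjoint

/-- `A'_max := (A_min)*`. -/
def Amax' : H →ₗ.[ℂ] H := S.Amin.adjoint

/-- `u_ζ := u - A_γ^{-1} A_max u`, the nullspace component of `u ∈ D(A_max)`. -/
def uzeta (u : S.Amax.domain) : H := (u : H) - S.Agaminv (S.Amax u)

/-- `v_{ζ'} := v - (A_γ^*)^{-1} A'_max v`, the nullspace component of `v ∈ D(A'_max)`. -/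
def vzeta (v : S.Amax'.domain) : H := (v : H) - S.Agamstarinv (S.Amax' v)

/-- `Z := ker A_max`, as a submodule of `H`. -/
def Zker : Submodule ℂ H := (LinearMap.ker S.Amax.toFun).map S.Amax.domain.subtype

/-- `Z' := ker A'_max`, as a submodule of `H`. -/
def Zker' : Submodule ℂ H := (LinearMap.ker S.Amax'.toFun).map S.Amax'.domain.subtype

lemma coe_Zker :
    (S.Zker : Set H) = ⋂ v : S.Amin'.domain, {y : H | (inner ℂ y (S.Amin' v) : ℂ) = 0} := by
  ext y
  simp only [Set.mem_iInter, Set.mem_setOf_eq, SetLike.mem_coe, Zker, Submodule.mem_map,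
    LinearMap.mem_ker]
  constructor
  · rintro ⟨u, hu, rfl⟩ v
    have h := (LinearPMap.adjoint_isFormalAdjoint S.dense_Amin') u v
    have hu' : S.Amin'.adjoint u = 0 := hu
    rw [hu'] at h
    simpa using h.symm
  · intro h
    have hmem : y ∈ S.Amax.domain := by
      refine LinearPMap.mem_adjoint_domain_of_exists _ ⟨0, fun x => ?_⟩
      simp [h x]
    refine ⟨⟨y, hmem⟩, ?_, rfl⟩
    exact LinearPMap.adjoint_apply_eq S.dense_Amin' ⟨y, hmem⟩ fun x => by simp [h x]

lemma isClosed_Zker : IsClosed (S.Zker : Set H) := by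
  rw [S.coe_Zker]
  exact isClosed_iInter fun v =>
    isClosed_eq (Continuous.inner continuous_id continuous_const) continuous_const

lemma coe_Zker' :
    (S.Zker' : Set H) = ⋂ v : S.Amin.domain, {y : H | (inner ℂ y (S.Amin v) : ℂ) = 0} := by
  ext y
  simp only [Set.mem_iInter, Set.mem_setOf_eq, SetLike.mem_coe, Zker', Submodule.mem_map,
    LinearMap.mem_ker]
  constructor
  · rintro ⟨u, hu, rfl⟩ v
    have h := (LinearPMap.adjoint_isFormalAdjoint S.dense_Amin) u v
    have hu' : S.Amin.adjoint u = 0 := hu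
    rw [hu'] at h
    simpa using h.symm
  · intro h
    have hmem : y ∈ S.Amax'.domain := by
      refine LinearPMap.mem_adjoint_domain_of_exists _ ⟨0, fun x => ?_⟩
      simp [h x]
    refine ⟨⟨y, hmem⟩, ?_, rfl⟩
    exact LinearPMap.adjoint_apply_eq S.dense_Amin ⟨y, hmem⟩ fun x => by simp [h x]

lemma isClosed_Zker' : IsClosed (S.Zker' : Set H) := by
  rw [S.coe_Zker']
  exact isClosed_iInter fun v =>
    isClosed_eq (Continuous.inner continuous_id continuous_const) continuous_const

/-- The orthogonal projection onto `Z = ker A_max`. -/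
def projZ : H →L[ℂ] H := projCl S.Zker S.isClosed_Zker

/-- The orthogonal projection onto `Z' = ker A'_max`. -/
def projZ' : H →L[ℂ] H := projCl S.Zker' S.isClosed_Zker'

variable (At : H →ₗ.[ℂ] H)

/-- `D(T) = {u_ζ : u ∈ D(Ã)}`, the set of nullspace components of elements of `D(Ã)`. -/
def dzeta : Set H := {x | ∃ u : S.Amax.domain, (u : H) ∈ At.domain ∧ x = S.uzeta u}

/-- `{v_{ζ'} : v ∈ D(Ã*)}`. -/
def dzeta' : Set H := {x | ∃ v : S.Amax'.domain, (v : H) ∈ At.adjoint.domain ∧ x = S.vzeta v}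

/-- `V := closure {u_ζ : u ∈ D(Ã)}`. -/
def Vsub : Submodule ℂ H := (Submodule.span ℂ (S.dzeta At)).topologicalClosure

/-- `W := closure {v_{ζ'} : v ∈ D(Ã*)}`. -/
def Wsub : Submodule ℂ H := (Submodule.span ℂ (S.dzeta' At)).topologicalClosure

lemma isClosed_Vsub : IsClosed ((S.Vsub At : Set H)) :=
  Submodule.isClosed_topologicalClosure _

lemma isClosed_Wsub : IsClosed ((S.Wsub At : Set H)) :=
  Submodule.isClosed_topologicalClosure _

/-- The orthogonal projection onto `V`. -/
def projV : H →L[ℂ] H := projCl (S.Vsub At) (S.isClosed_Vsub At)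

/-- The orthogonal projection onto `W`. -/
def projW : H →L[ℂ] H := projCl (S.Wsub At) (S.isClosed_Wsub At)

/-- The set `{(u_ζ, pr_W (A_max u)) : u ∈ D(Ã)}`, for a general closed subspace `W`. -/
def TgraphOn (W : Submodule ℂ H) (hW : IsClosed (W : Set H)) : Set (H × H) :=
  {p | ∃ u : S.Amax.domain, (u : H) ∈ At.domain ∧ p.1 = S.uzeta u ∧
    p.2 = projCl W hW (S.Amax u)}

/-- The graph of the operator `T : V → W` corresponding to `Ã`. -/
def Tgraph : Set (H × H) := S.TgraphOn At (S.Wsub At) (S.isClosed_Wsub At)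


/-- `F^λ := I - λ A_γ^{-1}`. -/
def Fop (lam : ℂ) : H →L[ℂ] H := ContinuousLinearMap.id ℂ H - lam • S.Agaminv

/-- `F'^{λ̄} := I - λ̄ (A_γ^*)^{-1}`. -/
def Fop' (lam : ℂ) : H →L[ℂ] H := ContinuousLinearMap.id ℂ H - (starRingEnd ℂ lam) • S.Agamstarinv

/-- `Z_λ := ker(A_max - λ)`, as a subset of `H`. -/
def ZkerL (lam : ℂ) : Set H :=
  {x | ∃ hx : x ∈ S.Amax.domain, S.Amax ⟨x, hx⟩ = lam • x}

/-- `Z'_{λ̄} := ker(A'_max - λ̄)`, as a subset of `H`. -/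
def ZkerL' (lam : ℂ) : Set H :=
  {x | ∃ hx : x ∈ S.Amax'.domain, S.Amax' ⟨x, hx⟩ = (starRingEnd ℂ lam) • x}

/-- `pr^λ_ζ u := u - (A_γ - λ)^{-1}(A_max - λ)u`, given the resolvent `R = (A_γ - λ)^{-1}`. -/
def uzetaL (lam : ℂ) (R : H →L[ℂ] H) (u : S.Amax.domain) : H :=
  (u : H) - R (S.Amax u - lam • (u : H))

/-- `pr^{λ̄}_{ζ'} v := v - (A_γ^* - λ̄)^{-1}(A'_max - λ̄)v`,
given the resolvent `R' = (A_γ^* - λ̄)^{-1}`. -/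
def vzetaL (lam : ℂ) (R' : H →L[ℂ] H) (v : S.Amax'.domain) : H :=
  (v : H) - R' (S.Amax' v - (starRingEnd ℂ lam) • (v : H))

/-- `D(T^λ) = {pr^λ_ζ u : u ∈ D(Ã)}`. -/
def dzetaL (lam : ℂ) (R : H →L[ℂ] H) : Set H :=
  {x | ∃ u : S.Amax.domain, (u : H) ∈ At.domain ∧ x = S.uzetaL lam R u}

/-- `{pr^{λ̄}_{ζ'} v : v ∈ D(Ã*)}`. -/
def dzetaL' (lam : ℂ) (R' : H →L[ℂ] H) : Set H :=
  {x | ∃ v : S.Amax'.domain, (v : H) ∈ At.adjoint.domain ∧ x = S.vzetaL lam R' v}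

/-- `V_λ := closure {pr^λ_ζ u : u ∈ D(Ã)}`. -/
def VLsub (lam : ℂ) (R : H →L[ℂ] H) : Submodule ℂ H :=
  (Submodule.span ℂ (S.dzetaL At lam R)).topologicalClosure

/-- `W_{λ̄} := closure {pr^{λ̄}_{ζ'} v : v ∈ D(Ã*)}`. -/
def WLsub (lam : ℂ) (R' : H →L[ℂ] H) : Submodule ℂ H :=
  (Submodule.span ℂ (S.dzetaL' At lam R')).topologicalClosure

lemma isClosed_WLsub (lam : ℂ) (R' : H →L[ℂ] H) : IsClosed ((S.WLsub At lam R' : Set H)) :=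
  Submodule.isClosed_topologicalClosure _

/-- The orthogonal projection onto `W_{λ̄}`. -/
def projWL (lam : ℂ) (R' : H →L[ℂ] H) : H →L[ℂ] H :=
  projCl (S.WLsub At lam R') (S.isClosed_WLsub At lam R')

/-- The graph of the operator `T^λ : V_λ → W_{λ̄}` corresponding to `Ã - λ`:
`{(pr^λ_ζ u, pr_{W_{λ̄}}((A_max - λ)u)) : u ∈ D(Ã)}`. -/
def TgraphL (lam : ℂ) (R R' : H →L[ℂ] H) : Set (H × H) :=
  {p | ∃ u : S.Amax.domain, (u : H) ∈ At.domain ∧ p.1 = S.uzetaL lam R u ∧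
    p.2 = S.projWL At lam R' (S.Amax u - lam • (u : H))}

/-- `G^λ_{V,W} x := -pr_W (λ E^λ x)`, where `W = W(Ã)`. -/
def Gval (lam : ℂ) (R : H →L[ℂ] H) (x : H) : H :=
  -(S.projW At (lam • Eop lam R x))

/-- `G^μ_{Z,Z} z := -pr_Z (μ E^μ z)`. -/
def GZval (lam : ℂ) (R : H →L[ℂ] H) (x : H) : H :=
  -(S.projZ (lam • Eop lam R x))

lemma mem_Amax_res {lam : ℂ} {Rt : H →L[ℂ] H} (h2 : At ≤ S.Amax)
    (hRt : IsResolvent At lam Rt) (w : H) :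
    S.Agaminv w - Rt (w - lam • S.Agaminv w) ∈ S.Amax.domain :=
  Submodule.sub_mem _ (S.Agam_le_max.1 (S.Agaminv_mem w)) (h2.1 (hRt.mem _))

/-- `M(λ) w := pr_ζ ((I - (Ã - λ)^{-1}(A_max - λ)) A_γ^{-1} w)`, the value of the abstract
`M`-function on `w`. -/
def Mval {lam : ℂ} {Rt : H →L[ℂ] H} (h2 : At ≤ S.Amax) (hRt : IsResolvent At lam Rt)
    (w : H) : H :=
  S.uzeta ⟨S.Agaminv w - Rt (w - lam • S.Agaminv w), S.mem_Amax_res At h2 hRt w⟩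

end Setup

/-- Resolvents are unique. -/
theorem IsResolvent.uniq {P : H →ₗ.[ℂ] H} {lam : ℂ} {R1 R2 : H →L[ℂ] H}
    (h1 : IsResolvent P lam R1) (h2 : IsResolvent P lam R2) : R1 = R2 := by
  ext f
  have ha := h1.left ⟨R2 f, h2.mem f⟩
  have hb := h2.right f
  simp only [Submodule.coe_mk] at ha hb
  rw [hb] at ha
  exact ha

/-- Perturbation of the resolvent: Neumann series. -/
theorem isResolvent_perturb {P : H →ₗ.[ℂ] H} {lam0 : ℂ} {R0 : H →L[ℂ] H}
    (h : IsResolvent P lam0 R0) {lam : ℂ} (hlt : ‖(lam - lam0) • R0‖ < 1) :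
    IsResolvent P lam (R0 * ↑(Units.oneSub ((lam - lam0) • R0) hlt)⁻¹) := by
  set e : (H →L[ℂ] H)ˣ := Units.oneSub ((lam - lam0) • R0) hlt with he
  have hev : (e : H →L[ℂ] H) = 1 - (lam - lam0) • R0 := rfl
  have hinv : ∀ x : H, (↑e⁻¹ : H →L[ℂ] H) ((e : H →L[ℂ] H) x) = x := fun x => by
    rw [← ContinuousLinearMap.mul_apply, e.inv_mul, ContinuousLinearMap.one_apply]
  have hinv' : ∀ x : H, (e : H →L[ℂ] H) ((↑e⁻¹ : H →L[ℂ] H) x) = x := fun x => by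
    rw [← ContinuousLinearMap.mul_apply, e.mul_inv, ContinuousLinearMap.one_apply]
  have hmem : ∀ f : H, (R0 * ↑e⁻¹) f ∈ P.domain := fun f => h.mem _
  refine ⟨hmem, ?_, ?_⟩
  · intro u
    have hg : P u - lam • (u : H) = (e : H →L[ℂ] H) (P u - lam0 • (u : H)) := by
      rw [hev]
      simp only [ContinuousLinearMap.sub_apply, ContinuousLinearMap.one_apply,
        ContinuousLinearMap.smul_apply, h.left u]
      module
    rw [hg]
    show R0 ((↑e⁻¹ : H →L[ℂ] H) ((e : H →L[ℂ] H) (P u - lam0 • (u : H)))) = u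
    rw [hinv]
    exact h.left u
  · intro f
    have hR : (R0 * ↑e⁻¹) f = R0 ((↑e⁻¹ : H →L[ℂ] H) f) := rfl
    have hsub : (⟨(R0 * ↑e⁻¹) f, hmem f⟩ : P.domain)
        = ⟨R0 ((↑e⁻¹ : H →L[ℂ] H) f), h.mem ((↑e⁻¹ : H →L[ℂ] H) f)⟩ := Subtype.ext hR
    rw [hsub, hR, sub_eq_iff_eq_add.mp (h.right ((↑e⁻¹ : H →L[ℂ] H) f))]
    have h5 : (↑e⁻¹ : H →L[ℂ] H) f - (lam - lam0) • R0 ((↑e⁻¹ : H →L[ℂ] H) f) = f := by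
      have h6 := hinv' f
      rw [hev] at h6
      simpa using h6
    have h7 : (↑e⁻¹ : H →L[ℂ] H) f + lam0 • R0 ((↑e⁻¹ : H →L[ℂ] H) f)
        - lam • R0 ((↑e⁻¹ : H →L[ℂ] H) f)
        = (↑e⁻¹ : H →L[ℂ] H) f - (lam - lam0) • R0 ((↑e⁻¹ : H →L[ℂ] H) f) := by module
    rw [h7]
    exact h5

theorem resSet_isOpen (P : H →ₗ.[ℂ] H) : IsOpen (resSet P) := by
  rw [Metric.isOpen_iff]
  rintro lam0 ⟨R0, hR0⟩
  refine ⟨(‖R0‖ + 1)⁻¹, by positivity, fun lam hlam => ?_⟩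
  rw [Metric.mem_ball, dist_eq_norm] at hlam
  have hlt : ‖(lam - lam0) • R0‖ < 1 := by
    rw [norm_smul]
    calc ‖lam - lam0‖ * ‖R0‖ ≤ ‖lam - lam0‖ * (‖R0‖ + 1) := by
          gcongr; linarith
      _ < (‖R0‖ + 1)⁻¹ * (‖R0‖ + 1) := by
          apply mul_lt_mul_of_pos_right hlam; positivity
      _ = 1 := by field_simp
  exact ⟨_, isResolvent_perturb hR0 hlt⟩

section Key

variable (S : Setup H)

lemma Agam_le_Amax : S.Agam ≤ S.Amax := S.Agam_le_max

lemma Amax_Agaminv (w : H) :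
    S.Amax ⟨S.Agaminv w, (Agam_le_Amax S).1 (S.Agaminv_mem w)⟩ = w := by
  rw [← (Agam_le_Amax S).2 (x := ⟨S.Agaminv w, S.Agaminv_mem w⟩) rfl]
  exact S.Agaminv_right w

/-- The main computation: the value of the `M`-function equals an explicitly bounded-linear
expression, and it lies in `V`. -/
lemma mval_key (At : H →ₗ.[ℂ] H) (h2 : At ≤ S.Amax)
    {lam : ℂ} {Rt : H →L[ℂ] H} (hRt : IsResolvent At lam Rt) (w : H) :
    S.Mval At h2 hRt w = (S.Fop lam) (S.Agaminv w - Rt ((S.Fop lam) w)) ∧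
      S.Mval At h2 hRt w ∈ S.Vsub At := by
  set a : H := S.Agaminv w with ha_def
  set f : H := w - lam • a with hf_def
  set b : H := Rt f with hb_def
  have ha : a ∈ S.Amax.domain := (Agam_le_Amax S).1 (S.Agaminv_mem w)
  have hbAt : b ∈ At.domain := hRt.mem f
  have hb : b ∈ S.Amax.domain := h2.1 hbAt
  have hu : a - b ∈ S.Amax.domain := Submodule.sub_mem _ ha hb
  have hAa : S.Amax ⟨a, ha⟩ = w := Amax_Agaminv S w
  have hAb : S.Amax ⟨b, hb⟩ = f + lam • b := by
    rw [← h2.2 (x := ⟨b, hbAt⟩) rfl]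
    have h3 := hRt.right f
    rw [← h3]
    abel
  have hsplit : (⟨a - b, hu⟩ : S.Amax.domain) = ⟨a, ha⟩ - ⟨b, hb⟩ := rfl
  have hAu : S.Amax ⟨a - b, hu⟩ = lam • (a - b) := by
    rw [hsplit, LinearPMap.map_sub, hAa, hAb, hf_def]
    module
  have hMu : S.Mval At h2 hRt w = S.uzeta ⟨a - b, hu⟩ := rfl
  constructor
  · rw [hMu]
    have hFw : (S.Fop lam) w = f := by
      simp only [Setup.Fop, ContinuousLinearMap.sub_apply, ContinuousLinearMap.id_apply,
        ContinuousLinearMap.smul_apply, hf_def, ha_def]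
    rw [hFw]
    simp only [Setup.uzeta, hAu, Setup.Fop, ContinuousLinearMap.sub_apply,
      ContinuousLinearMap.id_apply, ContinuousLinearMap.smul_apply, map_smul]
    rfl
  · rw [hMu]
    have huz : S.uzeta ⟨a - b, hu⟩ = S.uzeta ⟨a, ha⟩ - S.uzeta ⟨b, hb⟩ := by
      simp only [Setup.uzeta, hsplit, LinearPMap.map_sub, map_sub]
      abel
    have hza : S.uzeta ⟨a, ha⟩ = 0 := by
      show (a : H) - S.Agaminv (S.Amax ⟨a, ha⟩) = 0
      rw [hAa]
      exact sub_self _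
    have hzb : S.uzeta ⟨b, hb⟩ ∈ S.Vsub At := by
      apply Submodule.le_topologicalClosure
      apply Submodule.subset_span
      exact ⟨⟨b, hb⟩, hbAt, rfl⟩
    rw [huz, hza, zero_sub]
    exact Submodule.neg_mem _ hzb

end Key

theorem statement_13 (S : Setup H) (At : H →ₗ.[ℂ] H)
    (h1 : S.Amin ≤ At) (h2 : At ≤ S.Amax)
    (hcl : IsClosed (At.graph : Set (H × H)))
    (T : H →ₗ.[ℂ] H) (hT : (T.graph : Set (H × H)) = S.Tgraph At) :
    ∃ Mf : ℂ → (H →L[ℂ] H),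
      (∀ (lam : ℂ) (Rt : H →L[ℂ] H) (hRt : IsResolvent At lam Rt),
        ∀ w : H, w ∈ S.Wsub At →
          Mf lam w = S.Mval At h2 hRt w ∧ Mf lam w ∈ S.Vsub At) ∧
      IsOpen (resSet At) ∧ DifferentiableOn ℂ Mf (resSet At) := by
  classical
  set Res : ℂ → (H →L[ℂ] H) := fun lam =>
    if h : lam ∈ resSet At then Classical.choose h else 0 with hRes
  have hResSpec : ∀ {lam : ℂ}, lam ∈ resSet At → IsResolvent At lam (Res lam) := by
    intro lam h
    rw [hRes]
    simp only [dif_pos h]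
    exact Classical.choose_spec h
  refine ⟨fun lam => (S.Fop lam).comp (S.Agaminv - (Res lam).comp (S.Fop lam)), ?_,
    resSet_isOpen At, ?_⟩
  · intro lam Rt hRt w _
    have hmem : lam ∈ resSet At := ⟨Rt, hRt⟩
    have hRes_eq : Res lam = Rt := (hResSpec hmem).uniq hRt
    have key := mval_key S At h2 hRt w
    have heq : ((S.Fop lam).comp (S.Agaminv - (Res lam).comp (S.Fop lam))) w
        = S.Mval At h2 hRt w := by
      rw [hRes_eq, key.1]
      simp only [ContinuousLinearMap.comp_apply, ContinuousLinearMap.sub_apply]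
    exact ⟨heq, heq ▸ key.2⟩
  · intro lam0 hlam0
    apply DifferentiableAt.differentiableWithinAt
    have hR0 : IsResolvent At lam0 (Res lam0) := hResSpec hlam0
    set R0 := Res lam0 with hR0def
    have hball : Metric.ball lam0 ((‖R0‖ + 1)⁻¹) ∈ 𝓝 lam0 :=
      Metric.ball_mem_nhds _ (by positivity)
    have hev : ∀ᶠ lam in 𝓝 lam0,
        Res lam = R0 * Ring.inverse (1 - (lam - lam0) • R0) := by
      filter_upwards [hball] with lam hlam
      rw [Metric.mem_ball, dist_eq_norm] at hlam
      have hlt : ‖(lam - lam0) • R0‖ < 1 := by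
        rw [norm_smul]
        calc ‖lam - lam0‖ * ‖R0‖ ≤ ‖lam - lam0‖ * (‖R0‖ + 1) := by gcongr; linarith
          _ < (‖R0‖ + 1)⁻¹ * (‖R0‖ + 1) := by
              apply mul_lt_mul_of_pos_right hlam; positivity
          _ = 1 := by field_simp
      have hres := isResolvent_perturb hR0 hlt
      have h6 : Res lam = R0 * ↑(Units.oneSub ((lam - lam0) • R0) hlt)⁻¹ :=
        (hResSpec ⟨_, hres⟩).uniq hres
      rw [h6, NormedRing.inverse_one_sub _ hlt]
    have hFop : DifferentiableAt ℂ (fun lam => S.Fop lam) lam0 := by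
      simp only [Setup.Fop]
      exact (differentiableAt_const _).sub (differentiableAt_id.smul_const _)
    have hInner : DifferentiableAt ℂ
        (fun lam : ℂ => (1 : H →L[ℂ] H) - (lam - lam0) • R0) lam0 :=
      (differentiableAt_const _).sub
        ((differentiableAt_id.sub (differentiableAt_const _)).smul_const _)
    have hUnit : IsUnit ((1 : H →L[ℂ] H) - (lam0 - lam0) • R0) := by
      simp only [sub_self, zero_smul, sub_zero]
      exact isUnit_one
    have hInv : DifferentiableAt ℂ
        (fun lam : ℂ => Ring.inverse ((1 : H →L[ℂ] H) - (lam - lam0) • R0)) lam0 :=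
      hInner.inverse hUnit
    have hF : DifferentiableAt ℂ (fun lam : ℂ =>
        (S.Fop lam).comp (S.Agaminv -
          (R0 * Ring.inverse ((1 : H →L[ℂ] H) - (lam - lam0) • R0)).comp (S.Fop lam))) lam0 :=
      hFop.clm_comp ((differentiableAt_const _).sub
        (((differentiableAt_const R0).mul hInv).clm_comp hFop))
    apply hF.congr_of_eventuallyEq
    filter_upwards [hev] with lam hlam
    rw [hlam]

end GrubbExt
end
end

section
/- (Boundary triple property.) Define Γ₁ u := pr_{Z'}(A_max u) and Γ₀ u := u_ζ for u ∈ D(A_max), and Γ'₁ v := pr_Z(A'_max v) and Γ'₀ v := v_{ζ'} for v ∈ D(A'_max). Then: (i) the map u ↦ (Γ₁ u, Γ₀ u) from D(A_max) to Z' × Z is surjective and its kernel is exactly D(A_min); (ii) the map v ↦ (Γ'₁ v, Γ'₀ v) from D(A'_max) to Z × Z' is surjective and its kernel is exactly D(A'_min); (iii) for all u ∈ D(A_max) and v ∈ D(A'_max): ⟨A_max u, v⟩ − ⟨u, A'_max v⟩ = ⟨Γ₁ u, Γ'₀ v⟩ − ⟨Γ₀ u, Γ'₁ v⟩. -/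
noncomputable section

open Filter Topology

namespace GrubbExt

variable {H : Type*} [NormedAddCommGroup H] [InnerProductSpace ℂ H] [CompleteSpace H]

section AuxLemmas

lemma sub_projCl_inner (K : Submodule ℂ H) (hK : IsClosed (K : Set H)) (x w : H) (hw : w ∈ K) :
    (inner ℂ (x - projCl K hK x) w : ℂ) = 0 := by
  haveI : CompleteSpace K := hK.completeSpace_coe
  exact K.starProjection_inner_eq_zero x w hw

lemma projCl_inner_left (K : Submodule ℂ H) (hK : IsClosed (K : Set H)) (x w : H) (hw : w ∈ K) :
    (inner ℂ (projCl K hK x) w : ℂ) = inner ℂ x w := by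
  have h := sub_projCl_inner K hK x w hw
  rw [inner_sub_left] at h
  linear_combination -h

lemma inner_projCl_right (K : Submodule ℂ H) (hK : IsClosed (K : Set H)) (x w : H) (hw : w ∈ K) :
    (inner ℂ w (projCl K hK x) : ℂ) = inner ℂ w x := by
  have h := projCl_inner_left K hK x w hw
  have := congrArg (starRingEnd ℂ) h
  simpa [inner_conj_symm] using this

lemma projCl_eq_self (K : Submodule ℂ H) (hK : IsClosed (K : Set H)) {x : H} (hx : x ∈ K) :
    projCl K hK x = x := by
  haveI : CompleteSpace K := hK.completeSpace_coe
  exact K.starProjection_eq_self_iff.mpr hx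

lemma projCl_eq_zero_iff (K : Submodule ℂ H) (hK : IsClosed (K : Set H)) {x : H} :
    projCl K hK x = 0 ↔ x ∈ Kᗮ := by
  haveI : CompleteSpace K := hK.completeSpace_coe
  constructor
  · intro h
    have h0 : (K.orthogonalProjectionOnto x : H) = 0 := h
    exact Submodule.orthogonalProjectionOnto_eq_zero_iff.mp (by exact_mod_cast Subtype.ext h0)
  · intro h
    have h0 : K.orthogonalProjectionOnto x = 0 := Submodule.orthogonalProjectionOnto_eq_zero_iff.mpr h
    simp [projCl, h0]

/-- If `A` is closed and densely defined and `⟪A† v, u⟫ = ⟪v, f⟫` for all `v ∈ D(A†)`,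
then `u ∈ D(A)` (the essential content of `A** = A`). -/
lemma mem_domain_of_forall_adjoint {A : H →ₗ.[ℂ] H} (hd : Dense (A.domain : Set H))
    (hc : IsClosed (A.graph : Set (H × H))) {u f : H}
    (h : ∀ v : A.adjoint.domain, (inner ℂ (A.adjoint v) u : ℂ) = inner ℂ (v : H) f) :
    u ∈ A.domain := by
  set e : WithLp 2 (H × H) ≃L[ℂ] H × H := WithLp.prodContinuousLinearEquiv 2 ℂ H H
  set G : Submodule ℂ (WithLp 2 (H × H)) :=
    A.graph.comap (e.toLinearEquiv : WithLp 2 (H × H) ≃ₗ[ℂ] H × H).toLinearMap with hG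
  have hGc : IsClosed (G : Set (WithLp 2 (H × H))) := hc.preimage e.continuous
  have hmem : e.symm (u, f) ∈ Gᗮᗮ := by
    rw [Submodule.mem_orthogonal]
    intro w hw
    rw [Submodule.mem_orthogonal] at hw
    have hb : w.snd ∈ A.adjoint.domain := by
      apply LinearPMap.mem_adjoint_domain_of_exists
      refine ⟨-w.fst, fun x => ?_⟩
      have hx : e.symm ((x : H), A x) ∈ G := by
        simp only [hG, Submodule.mem_comap]
        simpa using A.mem_graph x
      have := hw _ hx
      simp only [WithLp.prod_inner_apply, WithLp.ofLp_fst, WithLp.ofLp_snd] at this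
      have h1 : (e.symm ((x : H), A x)).fst = (x : H) := rfl
      have h2 : (e.symm ((x : H), A x)).snd = A x := rfl
      rw [h1, h2] at this
      have := congrArg (starRingEnd ℂ) this
      simp only [map_add, inner_conj_symm, map_zero] at this
      rw [inner_neg_left]
      linear_combination -this
    have hval : A.adjoint ⟨w.snd, hb⟩ = -w.fst := by
      apply LinearPMap.adjoint_apply_eq hd
      intro x
      have hx : e.symm ((x : H), A x) ∈ G := by
        simp only [hG, Submodule.mem_comap]
        simpa using A.mem_graph x
      have := hw _ hx
      simp only [WithLp.prod_inner_apply, WithLp.ofLp_fst, WithLp.ofLp_snd] at this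
      have h1 : (e.symm ((x : H), A x)).fst = (x : H) := rfl
      have h2 : (e.symm ((x : H), A x)).snd = A x := rfl
      rw [h1, h2] at this
      have := congrArg (starRingEnd ℂ) this
      simp only [map_add, inner_conj_symm, map_zero] at this
      rw [inner_neg_left]
      linear_combination -this
    have := h ⟨w.snd, hb⟩
    rw [hval] at this
    have hcoe : ((⟨w.snd, hb⟩ : A.adjoint.domain) : H) = w.snd := rfl
    rw [hcoe] at this
    simp only [WithLp.prod_inner_apply, WithLp.ofLp_fst, WithLp.ofLp_snd]
    have h1 : (e.symm (u, f)).fst = u := rfl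
    have h2 : (e.symm (u, f)).snd = f := rfl
    rw [h1, h2]
    rw [inner_neg_left] at this
    linear_combination -this
  rw [Submodule.orthogonal_orthogonal_eq_closure,
    IsClosed.submodule_topologicalClosure_eq hGc] at hmem
  have : (u, f) ∈ A.graph := by simpa [hG, Submodule.mem_comap] using hmem
  rcases A.mem_graph_iff.mp this with ⟨x, hx, -⟩
  have hxu : (x : H) = u := hx
  rw [← hxu]; exact x.2

namespace Setup

variable (S : Setup H)

lemma dense_Agam : Dense (S.Agam.domain : Set H) :=
  S.dense_Amin.mono S.Amin_le_Agam.1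

/-- `A_γ* ⊂ A'_max`. -/
lemma Agam_adjoint_le : S.Agam.adjoint ≤ S.Amax' := by
  refine LinearPMap.IsFormalAdjoint.le_adjoint S.dense_Amin (fun x y => ?_)
  have h := LinearPMap.adjoint_isFormalAdjoint S.dense_Agam y ⟨(x : H), S.Amin_le_Agam.1 x.2⟩
  have hval : S.Amin x = S.Agam ⟨(x : H), S.Amin_le_Agam.1 x.2⟩ := S.Amin_le_Agam.2 rfl
  rw [hval]
  have := congrArg (starRingEnd ℂ) h
  simpa [inner_conj_symm] using this.symm

/-- `A'_min ⊂ A_γ*`. -/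
lemma Amin'_le_Agam_adjoint : S.Amin' ≤ S.Agam.adjoint := by
  refine LinearPMap.IsFormalAdjoint.le_adjoint S.dense_Agam (fun x y => ?_)
  have h := LinearPMap.adjoint_isFormalAdjoint S.dense_Amin'
    (⟨(x : H), S.Agam_le_max.1 x.2⟩ : S.Amax.domain) y
  have hval : S.Agam x = S.Amax ⟨(x : H), S.Agam_le_max.1 x.2⟩ := S.Agam_le_max.2 rfl
  rw [hval]
  exact h

lemma Agaminv_mem_Amax (f : H) : S.Agaminv f ∈ S.Amax.domain :=
  S.Agam_le_max.1 (S.Agaminv_mem f)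

lemma Amax_Agaminv (f : H) : S.Amax ⟨S.Agaminv f, S.Agaminv_mem_Amax f⟩ = f := by
  have h : S.Agam ⟨S.Agaminv f, S.Agaminv_mem f⟩
      = S.Amax ⟨S.Agaminv f, S.Agaminv_mem_Amax f⟩ := S.Agam_le_max.2 rfl
  rw [← h, S.Agaminv_right]

lemma Agamstarinv_mem_Amax' (f : H) : S.Agamstarinv f ∈ S.Amax'.domain :=
  S.Agam_adjoint_le.1 (S.Agamstarinv_mem f)

lemma Amax'_Agamstarinv (f : H) : S.Amax' ⟨S.Agamstarinv f, S.Agamstarinv_mem_Amax' f⟩ = f := by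
  have h : S.Agam.adjoint ⟨S.Agamstarinv f, S.Agamstarinv_mem f⟩
      = S.Amax' ⟨S.Agamstarinv f, S.Agamstarinv_mem_Amax' f⟩ := S.Agam_adjoint_le.2 rfl
  rw [← h, S.Agamstarinv_right]

lemma mem_Zker_iff {z : H} : z ∈ S.Zker ↔ ∃ h : z ∈ S.Amax.domain, S.Amax ⟨z, h⟩ = 0 := by
  constructor
  · rintro ⟨y, hy, rfl⟩
    exact ⟨y.2, by simpa using hy⟩
  · rintro ⟨h, h0⟩
    exact ⟨⟨z, h⟩, h0, rfl⟩

lemma mem_Zker'_iff {z : H} : z ∈ S.Zker' ↔ ∃ h : z ∈ S.Amax'.domain, S.Amax' ⟨z, h⟩ = 0 := by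
  constructor
  · rintro ⟨y, hy, rfl⟩
    exact ⟨y.2, by simpa using hy⟩
  · rintro ⟨h, h0⟩
    exact ⟨⟨z, h⟩, h0, rfl⟩

lemma uzeta_mem_Zker (u : S.Amax.domain) : S.uzeta u ∈ S.Zker := by
  set g : S.Amax.domain := ⟨S.Agaminv (S.Amax u), S.Agaminv_mem_Amax _⟩ with hg
  have hmem : S.uzeta u ∈ S.Amax.domain := (u - g).2
  refine (S.mem_Zker_iff).mpr ⟨hmem, ?_⟩
  have he : (⟨S.uzeta u, hmem⟩ : S.Amax.domain) = u - g := rfl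
  rw [he, S.Amax.map_sub, hg, S.Amax_Agaminv, sub_self]

lemma vzeta_mem_Zker' (v : S.Amax'.domain) : S.vzeta v ∈ S.Zker' := by
  set g : S.Amax'.domain := ⟨S.Agamstarinv (S.Amax' v), S.Agamstarinv_mem_Amax' _⟩ with hg
  have hmem : S.vzeta v ∈ S.Amax'.domain := (v - g).2
  refine (S.mem_Zker'_iff).mpr ⟨hmem, ?_⟩
  have he : (⟨S.vzeta v, hmem⟩ : S.Amax'.domain) = v - g := rfl
  rw [he, S.Amax'.map_sub, hg, S.Amax'_Agamstarinv, sub_self]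

/-- The key adjoint identity `⟪A_max u, v_γ'⟫ = ⟪u_γ, A'_max v⟫`. -/
lemma key_inner (f g : H) :
    (inner ℂ f (S.Agamstarinv g) : ℂ) = inner ℂ (S.Agaminv f) g := by
  have h := LinearPMap.adjoint_isFormalAdjoint S.dense_Agam
    (⟨S.Agamstarinv g, S.Agamstarinv_mem g⟩ : S.Agam.adjoint.domain)
    (⟨S.Agaminv f, S.Agaminv_mem f⟩ : S.Agam.domain)
  rw [S.Agamstarinv_right, S.Agaminv_right] at h
  have := congrArg (starRingEnd ℂ) h
  simpa [inner_conj_symm] using this.symm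

end Setup

end AuxLemmas

lemma Setup.projZ_def (S : Setup H) : S.projZ = projCl S.Zker S.isClosed_Zker := rfl
lemma Setup.projZ'_def (S : Setup H) : S.projZ' = projCl S.Zker' S.isClosed_Zker' := rfl

theorem statement_15 (S : Setup H) :
    (∀ p : H × H, p.1 ∈ S.Zker' → p.2 ∈ S.Zker →
      ∃ u : S.Amax.domain, S.projZ' (S.Amax u) = p.1 ∧ S.uzeta u = p.2) ∧
    (∀ u : S.Amax.domain,
      (S.projZ' (S.Amax u) = 0 ∧ S.uzeta u = 0) ↔ (u : H) ∈ S.Amin.domain) ∧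
    (∀ p : H × H, p.1 ∈ S.Zker → p.2 ∈ S.Zker' →
      ∃ v : S.Amax'.domain, S.projZ (S.Amax' v) = p.1 ∧ S.vzeta v = p.2) ∧
    (∀ v : S.Amax'.domain,
      (S.projZ (S.Amax' v) = 0 ∧ S.vzeta v = 0) ↔ (v : H) ∈ S.Amin'.domain) ∧
    ∀ (u : S.Amax.domain) (v : S.Amax'.domain),
      (inner ℂ (S.Amax u) (v : H) : ℂ) - (inner ℂ (u : H) (S.Amax' v) : ℂ) =
        (inner ℂ (S.projZ' (S.Amax u)) (S.vzeta v) : ℂ) -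
          (inner ℂ (S.uzeta u) (S.projZ (S.Amax' v)) : ℂ) := by
  have hAminAmax : S.Amin ≤ S.Amax := le_trans S.Amin_le_Agam S.Agam_le_max
  have hAmin'Amax' : S.Amin' ≤ S.Amax' :=
    le_trans S.Amin'_le_Agam_adjoint S.Agam_adjoint_le
  refine ⟨?_, ?_, ?_, ?_, ?_⟩
  · -- (i) surjectivity
    rintro ⟨z', z⟩ hz' hz
    obtain ⟨hzm, hz0⟩ := S.mem_Zker_iff.mp hz
    set a : S.Amax.domain := ⟨S.Agaminv z', S.Agaminv_mem_Amax z'⟩ with ha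
    set b : S.Amax.domain := ⟨z, hzm⟩ with hb
    have hval : S.Amax (a + b) = z' := by
      rw [S.Amax.map_add, ha, hb, S.Amax_Agaminv, hz0, add_zero]
    refine ⟨a + b, ?_, ?_⟩
    · rw [hval, S.projZ'_def]
      exact projCl_eq_self _ _ hz'
    · show ((a + b : S.Amax.domain) : H) - S.Agaminv (S.Amax (a + b)) = z
      rw [hval]
      have hco : ((a + b : S.Amax.domain) : H) = S.Agaminv z' + z := rfl
      rw [hco]
      abel
  · -- (i) kernel
    intro u
    constructor
    · rintro ⟨h0, h1⟩
      have hu : (u : H) = S.Agaminv (S.Amax u) := by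
        have h1' : (u : H) - S.Agaminv (S.Amax u) = 0 := h1
        exact sub_eq_zero.mp h1'
      rw [S.projZ'_def] at h0
      have hf : S.Amax u ∈ S.Zker'ᗮ := (projCl_eq_zero_iff _ _).mp h0
      apply mem_domain_of_forall_adjoint S.dense_Amin S.closed_Amin (f := S.Amax u)
      intro v
      show (inner ℂ (S.Amax' v) (u : H) : ℂ) = inner ℂ (v : H) (S.Amax u)
      have hdec : (v : H) = S.Agamstarinv (S.Amax' v) + S.vzeta v := by
        show _ = _ + ((v : H) - S.Agamstarinv (S.Amax' v))
        abel
      have hzero : (inner ℂ (S.Amax u) (S.vzeta v) : ℂ) = 0 :=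
        (Submodule.mem_orthogonal' _ _).mp hf _ (S.vzeta_mem_Zker' v)
      have hvz0 : (inner ℂ (S.vzeta v) (S.Amax u) : ℂ) = 0 := by
        have := congrArg (starRingEnd ℂ) hzero
        simpa [inner_conj_symm] using this
      have hkey := S.key_inner (S.Amax u) (S.Amax' v)
      have hconj : (inner ℂ (S.Agamstarinv (S.Amax' v)) (S.Amax u) : ℂ)
          = inner ℂ (S.Amax' v) (S.Agaminv (S.Amax u)) := by
        have := congrArg (starRingEnd ℂ) hkey
        simpa [inner_conj_symm] using this
      rw [hu, hdec, inner_add_left, hvz0, hconj, add_zero]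
    · intro hu
      have hAg : (u : H) ∈ S.Agam.domain := S.Amin_le_Agam.1 hu
      have hval : S.Amax u = S.Agam ⟨(u : H), hAg⟩ := (S.Agam_le_max.2 rfl).symm
      constructor
      · rw [S.projZ'_def]
        apply (projCl_eq_zero_iff _ _).mpr
        rw [Submodule.mem_orthogonal]
        intro w hw
        obtain ⟨hwm, hw0⟩ := S.mem_Zker'_iff.mp hw
        have h := LinearPMap.adjoint_isFormalAdjoint S.dense_Amin
          (⟨w, hwm⟩ : S.Amin.adjoint.domain) ⟨(u : H), hu⟩
        have hw0' : S.Amin.adjoint ⟨w, hwm⟩ = 0 := hw0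
        have hvm : S.Amin ⟨(u : H), hu⟩ = S.Amax u := hAminAmax.2 rfl
        rw [hw0', hvm, inner_zero_left] at h
        exact h.symm
      · show (u : H) - S.Agaminv (S.Amax u) = 0
        rw [hval, S.Agaminv_left, sub_self]
  · -- (ii) surjectivity
    rintro ⟨z, z'⟩ hz hz'
    obtain ⟨hzm, hz0⟩ := S.mem_Zker'_iff.mp hz'
    set a : S.Amax'.domain := ⟨S.Agamstarinv z, S.Agamstarinv_mem_Amax' z⟩ with ha
    set b : S.Amax'.domain := ⟨z', hzm⟩ with hb
    have hval : S.Amax' (a + b) = z := by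
      rw [S.Amax'.map_add, ha, hb, S.Amax'_Agamstarinv, hz0, add_zero]
    refine ⟨a + b, ?_, ?_⟩
    · rw [hval, S.projZ_def]
      exact projCl_eq_self _ _ hz
    · show ((a + b : S.Amax'.domain) : H) - S.Agamstarinv (S.Amax' (a + b)) = z'
      rw [hval]
      have hco : ((a + b : S.Amax'.domain) : H) = S.Agamstarinv z + z' := rfl
      rw [hco]
      abel
  · -- (ii) kernel
    intro v
    constructor
    · rintro ⟨h0, h1⟩
      have hv : (v : H) = S.Agamstarinv (S.Amax' v) := by
        have h1' : (v : H) - S.Agamstarinv (S.Amax' v) = 0 := h1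
        exact sub_eq_zero.mp h1'
      rw [S.projZ_def] at h0
      have hg : S.Amax' v ∈ S.Zkerᗮ := (projCl_eq_zero_iff _ _).mp h0
      apply mem_domain_of_forall_adjoint S.dense_Amin' S.closed_Amin' (f := S.Amax' v)
      intro u
      show (inner ℂ (S.Amax u) (v : H) : ℂ) = inner ℂ (u : H) (S.Amax' v)
      have hdec : (u : H) = S.Agaminv (S.Amax u) + S.uzeta u := by
        show _ = _ + ((u : H) - S.Agaminv (S.Amax u))
        abel
      have hzero : (inner ℂ (S.uzeta u) (S.Amax' v) : ℂ) = 0 :=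
        (Submodule.mem_orthogonal _ _).mp hg _ (S.uzeta_mem_Zker u)
      have hkey := S.key_inner (S.Amax u) (S.Amax' v)
      rw [hv, hdec, inner_add_left, hzero, add_zero, hkey]
    · intro hv
      have hAg : (v : H) ∈ S.Agam.adjoint.domain := S.Amin'_le_Agam_adjoint.1 hv
      have hval : S.Amax' v = S.Agam.adjoint ⟨(v : H), hAg⟩ := (S.Agam_adjoint_le.2 rfl).symm
      constructor
      · rw [S.projZ_def]
        apply (projCl_eq_zero_iff _ _).mpr
        rw [Submodule.mem_orthogonal]
        intro w hw
        obtain ⟨hwm, hw0⟩ := S.mem_Zker_iff.mp hw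
        have h := LinearPMap.adjoint_isFormalAdjoint S.dense_Amin'
          (⟨w, hwm⟩ : S.Amin'.adjoint.domain) ⟨(v : H), hv⟩
        have hw0' : S.Amin'.adjoint ⟨w, hwm⟩ = 0 := hw0
        have hvm : S.Amin' ⟨(v : H), hv⟩ = S.Amax' v := hAmin'Amax'.2 rfl
        rw [hw0', hvm, inner_zero_left] at h
        exact h.symm
      · show (v : H) - S.Agamstarinv (S.Amax' v) = 0
        rw [hval, S.Agamstarinv_left, sub_self]
  · -- (iii) Green's formula
    intro u v
    have h1 : (inner ℂ (S.projZ' (S.Amax u)) (S.vzeta v) : ℂ) = inner ℂ (S.Amax u) (S.vzeta v) := by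
      rw [S.projZ'_def]
      exact projCl_inner_left _ _ _ _ (S.vzeta_mem_Zker' v)
    have h2 : (inner ℂ (S.uzeta u) (S.projZ (S.Amax' v)) : ℂ) = inner ℂ (S.uzeta u) (S.Amax' v) := by
      rw [S.projZ_def]
      exact inner_projCl_right _ _ _ _ (S.uzeta_mem_Zker u)
    rw [h1, h2]
    show _ = (inner ℂ (S.Amax u) ((v : H) - S.Agamstarinv (S.Amax' v)) : ℂ) -
      inner ℂ ((u : H) - S.Agaminv (S.Amax u)) (S.Amax' v)
    rw [inner_sub_right, inner_sub_left]
    have hkey := S.key_inner (S.Amax u) (S.Amax' v)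
    linear_combination hkey

end GrubbExt
end
end
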